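/- Let φ(x) = 1 + ħ/x. For pairwise distinct variables x_r, x_s, x_t, the following rational function identity holds: φ(x_s-x_r)φ(x_t-x_r)φ(x_t-x_s) + φ(x_s-x_r)φ(x_t-x_r)φ(x_s-x_t) - 2φ(x_t-x_s)φ(x_s-x_r) - 2φ(x_s-x_t)φ(x_t-x_r) + φ(x_t-x_s) + φ(x_s-x_t) = 0. -/
import Mathlib

lemma aux8 (hbar a b : ℂ) (ha : a ≠ 0) (hb : b ≠ 0) (hab : a + b ≠ 0) :
    (1 + hbar / a) * (1 + hbar / (a + b)) * (1 + hbar / b)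
      + (1 + hbar / a) * (1 + hbar / (a + b)) * (1 + hbar / (-b))
      - 2 * (1 + hbar / b) * (1 + hbar / a)
      - 2 * (1 + hbar / (-b)) * (1 + hbar / (a + b))
      + (1 + hbar / b) + (1 + hbar / (-b)) = 0 := by
  have key : hbar / a * (hbar / (a + b)) - hbar / a * (hbar / b)
      + hbar / b * (hbar / (a + b)) = 0 := by
    rw [div_mul_div_comm, div_mul_div_comm, div_mul_div_comm]
    rw [div_sub_div _ _ (mul_ne_zero ha hab) (mul_ne_zero ha hb),
      div_add_div _ _ (mul_ne_zero (mul_ne_zero ha hab) (mul_ne_zero ha hb))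
        (mul_ne_zero hb hab), div_eq_zero_iff]
    left; ring
  rw [div_neg]
  linear_combination 2 * key

/-- With `φ(x) = 1 + ħ/x` and pairwise distinct `x_r, x_s, x_t`:
`φ(xₛ-x_r)φ(xₜ-x_r)φ(xₜ-xₛ) + φ(xₛ-x_r)φ(xₜ-x_r)φ(xₛ-xₜ) - 2φ(xₜ-xₛ)φ(xₛ-x_r)
 - 2φ(xₛ-xₜ)φ(xₜ-x_r) + φ(xₜ-xₛ) + φ(xₛ-xₜ) = 0`. -/
theorem stmt8 (hbar xr xs xt : ℂ) (hsr : xs ≠ xr) (htr : xt ≠ xr) (hts : xt ≠ xs) :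
    (let φ : ℂ → ℂ := (fun x => 1 + hbar / x);
     φ (xs - xr) * φ (xt - xr) * φ (xt - xs) + φ (xs - xr) * φ (xt - xr) * φ (xs - xt)
       - 2 * φ (xt - xs) * φ (xs - xr) - 2 * φ (xs - xt) * φ (xt - xr)
       + φ (xt - xs) + φ (xs - xt) = 0) := by
  have ha : xs - xr ≠ 0 := sub_ne_zero.mpr hsr
  have hb : xt - xs ≠ 0 := sub_ne_zero.mpr hts
  have hab : (xs - xr) + (xt - xs) ≠ 0 := by
    have := sub_ne_zero.mpr htr; intro h; apply this; linear_combination h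
  have key := aux8 hbar (xs - xr) (xt - xs) ha hb hab
  simp only
  have e1 : xt - xr = (xs - xr) + (xt - xs) := by ring
  have e2 : xs - xt = -(xt - xs) := by ring
  rw [e1, e2]
  linear_combination key
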